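/- Let G be a group, M a normal subgroup of G of finite index, and a, b ∈ G. If the element w(a, b) = (b a b⁻¹) · a · (b a b⁻¹)⁻¹ · a⁻² belongs to M, then a belongs to M. -/

import Mathlib

/-- If `0 < n` and `n ∣ 2^n - 1`, then `n = 1`. -/
lemma aux_dvd_two_pow_sub_one {n : ℕ} (hpos : 0 < n) (hdvd : n ∣ 2 ^ n - 1) : n = 1 := by
  by_contra hne
  set p := n.minFac with hp_def
  have hp : p.Prime := Nat.minFac_prime hne
  have hpn : p ∣ n := Nat.minFac_dvd n
  have h1le : 1 ≤ 2 ^ n := Nat.one_le_two_pow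
  have hp2 : p ≠ 2 := by
    intro h
    have h2d : (2 : ℕ) ∣ 2 ^ n - 1 := by
      have := hpn.trans hdvd; rwa [h] at this
    have h2p : (2 : ℕ) ∣ 2 ^ n := dvd_pow_self 2 hpos.ne'
    have : (2 : ℕ) ∣ 2 ^ n - (2 ^ n - 1) := Nat.dvd_sub h2p h2d
    rw [Nat.sub_sub_self h1le] at this
    exact absurd this (by norm_num)
  have hpd : p ∣ 2 ^ n - 1 := hpn.trans hdvd
  haveI : Fact p.Prime := ⟨hp⟩
  have h2ne : (2 : ZMod p) ≠ 0 := by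
    intro h
    have := (ZMod.natCast_eq_zero_iff 2 p).mp (by exact_mod_cast h)
    exact hp2 ((Nat.prime_dvd_prime_iff_eq hp Nat.prime_two).mp this)
  have hpow : (2 : ZMod p) ^ n = 1 := by
    have : ((2 ^ n - 1 : ℕ) : ZMod p) = 0 := (ZMod.natCast_eq_zero_iff _ p).mpr hpd
    have h2 : ((2 ^ n : ℕ) : ZMod p) - 1 = 0 := by
      rw [← Nat.cast_one, ← Nat.cast_sub h1le]; exact this
    have := sub_eq_zero.mp h2
    push_cast at this
    exact this
  set d := orderOf (2 : ZMod p) with hd_def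
  have hdn : d ∣ n := orderOf_dvd_of_pow_eq_one hpow
  have hdp : d ∣ p - 1 := ZMod.orderOf_dvd_card_sub_one h2ne
  have hgcd : Nat.gcd n (p - 1) = 1 := by
    by_contra hg
    set q := (Nat.gcd n (p - 1)).minFac with hq_def
    have hq : q.Prime := Nat.minFac_prime hg
    have hqn : q ∣ n := (Nat.minFac_dvd _).trans (Nat.gcd_dvd_left _ _)
    have hqp1 : q ∣ p - 1 := (Nat.minFac_dvd _).trans (Nat.gcd_dvd_right _ _)
    have hple : p ≤ q := Nat.minFac_le_of_dvd hq.two_le hqn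
    have hp1pos : 0 < p - 1 := by
      have := hp.two_le; omega
    have : q ≤ p - 1 := Nat.le_of_dvd hp1pos hqp1
    omega
  have hd1 : d = 1 := Nat.eq_one_of_dvd_one (hgcd ▸ Nat.dvd_gcd hdn hdp)
  have : (2 : ZMod p) = 1 := orderOf_eq_one_iff.mp hd1
  have h10 : (1 : ZMod p) = 0 := by
    rw [show (1 : ZMod p) = 2 - 1 by ring, this, sub_self]
  have : (p : ℕ) ∣ 1 := by
    have := (ZMod.natCast_eq_zero_iff 1 p).mp (by exact_mod_cast h10)
    exact this
  exact absurd (Nat.eq_one_of_dvd_one this) hp.one_lt.ne'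

/-- Let `M` be a finite-index normal subgroup of `G` and `a b : G`.
If Baumslag's word `w(a, b) = (b a b⁻¹) · a · (b a b⁻¹)⁻¹ · a⁻²` lies in `M`,
then `a ∈ M`. -/
theorem baumslag_word_mem {G : Type} [Group G] (M : Subgroup G) [M.Normal]
    (hM : M.FiniteIndex) (a b : G)
    (hw : (b * a * b⁻¹) * a * (b * a * b⁻¹)⁻¹ * (a ^ 2)⁻¹ ∈ M) :
    a ∈ M := by
  haveI := hM
  haveI : Finite (G ⧸ M) := Subgroup.finite_quotient_of_finiteIndex
  set x : G ⧸ M := ((a : G) : G ⧸ M) with hx_def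
  set y : G ⧸ M := ((b : G) : G ⧸ M) with hy_def
  have h1 : y * x * y⁻¹ * x * (y * x * y⁻¹)⁻¹ * (x ^ 2)⁻¹ = 1 := by
    have := (QuotientGroup.eq_one_iff _).2 hw
    simpa [hx_def, hy_def] using this
  have hconj : (y * x * y⁻¹) * x * (y * x * y⁻¹)⁻¹ = x ^ 2 := by
    have := mul_inv_eq_one.mp h1
    simpa using this
  set c := y * x * y⁻¹ with hc_def
  have hpow : ∀ k : ℕ, c ^ k * x * (c ^ k)⁻¹ = x ^ (2 ^ k) := by
    intro k
    induction k with
    | zero => simp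
    | succ k ih =>
      have : c ^ (k + 1) * x * (c ^ (k + 1))⁻¹
          = c * (c ^ k * x * (c ^ k)⁻¹) * c⁻¹ := by
        rw [pow_succ']
        group
      rw [this, ih, ← conj_pow, hconj, ← pow_mul, pow_succ']
  set n := orderOf x with hn_def
  have hnpos : 0 < n := orderOf_pos x
  have hcn : c ^ n = 1 := by
    have horder : orderOf c = n := by
      have : c = (MulAut.conj y) x := by simp [hc_def, MulAut.conj_apply]
      rw [this, MulEquiv.orderOf_eq]
    rw [← horder]
    exact pow_orderOf_eq_one c
  have hx2 : x ^ (2 ^ n) = x := by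
    have := hpow n
    rw [hcn] at this
    simpa using this.symm
  have hxe : x ^ (2 ^ n - 1) = 1 := by
    have h1le : 1 ≤ 2 ^ n := Nat.one_le_two_pow
    have : x ^ (2 ^ n - 1 + 1) = x := by rw [Nat.sub_add_cancel h1le]; exact hx2
    rw [pow_succ] at this
    calc x ^ (2 ^ n - 1) = x ^ (2 ^ n - 1) * x * x⁻¹ := by group
    _ = x * x⁻¹ := by rw [this]
    _ = 1 := mul_inv_cancel x
  have hdvd : n ∣ 2 ^ n - 1 := orderOf_dvd_of_pow_eq_one hxe
  have hn1 : n = 1 := aux_dvd_two_pow_sub_one hnpos hdvd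
  have hx1 : x = 1 := orderOf_eq_one_iff.mp hn1
  exact (QuotientGroup.eq_one_iff a).mp hx1
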